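/- arXiv:1302.6536 — 2 statements merged into one kernel-verified Lean document; each statement's English description precedes it below -/
import Mathlib

section
/- The 3-string braid group of the sphere B_3(S²) is a finite group of order 12, isomorphic to the semidirect product Z/3 ⋊ Z/4 with the non-trivial action of Z/4 on Z/3. -/
open FreeGroup

/-- The relations of the presentation of the 3-string sphere braid group
`B₃(S²) = ⟨σ₁, σ₂ | σ₁σ₂σ₁ = σ₂σ₁σ₂, σ₁σ₂²σ₁ = 1⟩`,
with generators indexed by `Bool` (`true ↦ σ₁`, `false ↦ σ₂`). -/
def sphereBraid3Rels : Set (FreeGroup Bool) :=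
  { of true * of false * of true * (of false * of true * of false)⁻¹,
    of true * of false * of false * of true }

/-- The 3-string braid group of the sphere `B₃(S²)`. -/
def SphereBraidGroupThree : Type := PresentedGroup sphereBraid3Rels

instance : Group SphereBraidGroupThree := by unfold SphereBraidGroupThree; infer_instance

/-- Hom out of `Multiplicative (ZMod n)` from an element of order dividing `n`. -/
def zmodHom {H : Type*} [Group H] (n : ℕ) [NeZero n] (x : H) (hx : x ^ n = 1) :
    Multiplicative (ZMod n) →* H :=
  AddMonoidHom.toMultiplicativeLeft <| ZMod.lift n ⟨zmultiplesHom (Additive H) (Additive.ofMul x),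
    by show (n : ℤ) • Additive.ofMul x = 0
       rw [← ofMul_zpow, zpow_natCast, hx]; rfl⟩

lemma zmodHom_apply_one {H : Type*} [Group H] (n : ℕ) [NeZero n] (x : H) (hx : x ^ n = 1) :
    zmodHom n x hx (Multiplicative.ofAdd (1 : ZMod n)) = x := by
  have : ((1 : ℤ) : ZMod n) = (1 : ZMod n) := by norm_num
  simp only [zmodHom, AddMonoidHom.coe_toMultiplicativeLeft, Function.comp_apply, toAdd_ofAdd,
    ← this, ZMod.lift_coe]
  show Additive.toMul ((1 : ℤ) • Additive.ofMul x) = x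
  simp

lemma homExt3 {H : Type*} [Group H] {f g : Multiplicative (ZMod 3) →* H}
    (h : f (Multiplicative.ofAdd 1) = g (Multiplicative.ofAdd 1)) : f = g := by
  refine MonoidHom.ext fun z => ?_
  have key : ∀ w : Multiplicative (ZMod 3),
      w = (Multiplicative.ofAdd (1 : ZMod 3)) ^ (Multiplicative.toAdd w).val := by decide
  rw [key z, map_pow, map_pow, h]

lemma homExt4 {H : Type*} [Group H] {f g : Multiplicative (ZMod 4) →* H}
    (h : f (Multiplicative.ofAdd 1) = g (Multiplicative.ofAdd 1)) : f = g := by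
  refine MonoidHom.ext fun z => ?_
  have key : ∀ w : Multiplicative (ZMod 4),
      w = (Multiplicative.ofAdd (1 : ZMod 4)) ^ (Multiplicative.toAdd w).val := by decide
  rw [key z, map_pow, map_pow, h]

lemma phi_eq_inv (φ : Multiplicative (ZMod 4) →* MulAut (Multiplicative (ZMod 3)))
    (hφ : φ ≠ 1) : ∀ n, φ (Multiplicative.ofAdd 1) n = n⁻¹ := by
  set α := φ (Multiplicative.ofAdd 1) with hα
  have key3 : ∀ w : Multiplicative (ZMod 3),
      w = 1 ∨ w = Multiplicative.ofAdd 1 ∨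
        w = Multiplicative.ofAdd 1 * Multiplicative.ofAdd 1 := by decide
  have hαne : α ≠ 1 := by
    intro h
    apply hφ
    have key4 : ∀ w : Multiplicative (ZMod 4),
        w = (Multiplicative.ofAdd (1 : ZMod 4)) ^ (Multiplicative.toAdd w).val := by decide
    refine MonoidHom.ext fun g => MulEquiv.ext fun n => ?_
    rw [key4 g, map_pow, ← hα, h]
    simp
  have hone : α (Multiplicative.ofAdd 1) ≠ 1 := by
    intro h
    exact (by decide : (Multiplicative.ofAdd (1 : ZMod 3)) ≠ 1)
      (α.injective (h.trans (_root_.map_one α).symm))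
  have hval : α (Multiplicative.ofAdd 1) = (Multiplicative.ofAdd 1)⁻¹ := by
    rcases key3 (α (Multiplicative.ofAdd 1)) with h | h | h
    · exact absurd h hone
    · exfalso
      apply hαne
      refine MulEquiv.ext fun n => ?_
      rcases key3 n with rfl | rfl | rfl
      · simp
      · simpa using h
      · rw [_root_.map_mul, h]; rfl
    · rw [h]; decide
  intro n
  rcases key3 n with rfl | rfl | rfl
  · simp
  · exact hval
  · rw [_root_.map_mul, hval]; decide

section Main

local notation "PB" => PresentedGroup sphereBraid3Rels

/-- The images of the two generators in the presented group. -/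
private def sP : PB := PresentedGroup.of true
private def tP : PB := PresentedGroup.of false

lemma rel1 : sP * tP * sP = tP * sP * tP := by
  have hmem : of true * of false * of true * (of false * of true * of false)⁻¹ ∈
      sphereBraid3Rels := Set.mem_insert _ _
  have h : PresentedGroup.mk sphereBraid3Rels
      (of true * of false * of true * (of false * of true * of false)⁻¹) = 1 :=
    (QuotientGroup.eq_one_iff _).2 (Subgroup.subset_normalClosure hmem)
  rw [_root_.map_mul, _root_.map_mul, _root_.map_inv, _root_.map_mul, _root_.map_mul, mul_inv_eq_one] at h
  exact h

lemma rel2 : sP * tP * tP * sP = 1 := by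
  have hmem : of true * of false * of false * of true ∈ sphereBraid3Rels :=
    Set.mem_insert_of_mem _ rfl
  have h : PresentedGroup.mk sphereBraid3Rels
      (of true * of false * of false * of true) = 1 :=
    (QuotientGroup.eq_one_iff _).2 (Subgroup.subset_normalClosure hmem)
  rw [_root_.map_mul, _root_.map_mul, _root_.map_mul] at h
  exact h

lemma h2P : tP * tP = sP⁻¹ * sP⁻¹ := by
  calc tP * tP = sP⁻¹ * (sP * tP * tP * sP) * sP⁻¹ := by simp [pow_succ, mul_assoc]
    _ = sP⁻¹ * 1 * sP⁻¹ := by rw [rel2]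
    _ = sP⁻¹ * sP⁻¹ := by simp [pow_succ, mul_assoc]

lemma htsP : tP * (sP * sP) = (sP * sP) * tP := by
  calc tP * (sP * sP) = tP * (sP⁻¹ * sP⁻¹)⁻¹ := by simp [pow_succ, mul_assoc]
    _ = tP * (tP * tP)⁻¹ := by rw [h2P]
    _ = (tP * tP)⁻¹ * tP := by simp [pow_succ, mul_assoc]
    _ = (sP⁻¹ * sP⁻¹)⁻¹ * tP := by rw [h2P]
    _ = (sP * sP) * tP := by simp [pow_succ, mul_assoc]

lemma hDsP : (sP * tP * sP) * sP = tP * (sP * tP * sP) := by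
  calc (sP * tP * sP) * sP = (tP * sP * tP) * sP := by rw [rel1]
    _ = tP * (sP * tP * sP) := by simp [pow_succ, mul_assoc]

lemma hcP : sP * sP = tP * tP := by
  have k1 : (sP * sP) * (sP * tP * sP) = (tP * tP) * (sP * tP * sP) := by
    calc (sP * sP) * (sP * tP * sP) = sP * (tP * (sP * sP)) * sP := by
          rw [htsP]; group
      _ = ((sP * tP * sP) * sP) * sP := by simp [pow_succ, mul_assoc]
      _ = (tP * (sP * tP * sP)) * sP := by rw [hDsP]
      _ = tP * ((sP * tP * sP) * sP) := by simp [pow_succ, mul_assoc]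
      _ = tP * (tP * (sP * tP * sP)) := by rw [hDsP]
      _ = (tP * tP) * (sP * tP * sP) := by simp [pow_succ, mul_assoc]
  exact mul_right_cancel k1

lemma hs4P : (sP * sP) * (sP * sP) = 1 := by
  calc (sP * sP) * (sP * sP) = (sP * sP) * (tP * tP) := by rw [hcP]
    _ = sP * (sP * tP * tP * sP) * sP⁻¹ := by simp [pow_succ, mul_assoc]
    _ = sP * 1 * sP⁻¹ := by rw [rel2]
    _ = 1 := by simp [pow_succ, mul_assoc]

lemma ht4P : (tP * tP) * (tP * tP) = 1 := by
  calc (tP * tP) * (tP * tP) = (sP⁻¹ * sP⁻¹) * (sP⁻¹ * sP⁻¹) := by rw [h2P]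
    _ = ((sP * sP) * (sP * sP))⁻¹ := by simp [pow_succ, mul_assoc]
    _ = 1 := by rw [hs4P]; group

lemma hsinvP : sP⁻¹ = sP * (sP * sP) := by
  calc sP⁻¹ = sP * (sP * sP) * ((sP * sP) * (sP * sP))⁻¹ := by simp [pow_succ, mul_assoc]
    _ = sP * (sP * sP) * 1⁻¹ := by rw [hs4P]
    _ = sP * (sP * sP) := by simp [pow_succ, mul_assoc]

lemma htinvP : tP⁻¹ = tP * (tP * tP) := by
  calc tP⁻¹ = tP * (tP * tP) * ((tP * tP) * (tP * tP))⁻¹ := by simp [pow_succ, mul_assoc]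
    _ = tP * (tP * tP) * 1⁻¹ := by rw [ht4P]
    _ = tP * (tP * tP) := by simp [pow_succ, mul_assoc]

lemma hy4P : sP ^ (4 : ℕ) = 1 := by
  calc sP ^ (4 : ℕ) = (sP * sP) * (sP * sP) := by simp [pow_succ, mul_assoc]
    _ = 1 := hs4P

lemma hx'P : tP * sP⁻¹ = (sP * sP) * (tP * sP) := by
  calc tP * sP⁻¹ = tP * (sP * (sP * sP)) := by rw [← hsinvP]
    _ = (tP * (sP * sP)) * sP := by simp [pow_succ, mul_assoc]
    _ = ((sP * sP) * tP) * sP := by rw [htsP]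
    _ = (sP * sP) * (tP * sP) := by simp [pow_succ, mul_assoc]

lemma hcommP : Commute (sP * sP) (tP * sP) := by
  unfold Commute SemiconjBy
  calc (sP * sP) * (tP * sP) = ((sP * sP) * tP) * sP := by simp [pow_succ, mul_assoc]
    _ = (tP * (sP * sP)) * sP := by rw [htsP]
    _ = (tP * sP) * (sP * sP) := by simp [pow_succ, mul_assoc]

lemma hts3P : (tP * sP) ^ (3 : ℕ) = sP * sP := by
  calc (tP * sP) ^ (3 : ℕ) = tP * (sP * tP * sP) * (tP * sP) := by simp [pow_succ, mul_assoc]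
    _ = tP * (tP * sP * tP) * (tP * sP) := by rw [rel1]
    _ = (tP * tP) * (sP * (tP * tP) * sP) := by simp [pow_succ, mul_assoc]
    _ = (tP * tP) * (sP * (sP⁻¹ * sP⁻¹) * sP) := by rw [h2P]
    _ = tP * tP := by simp [pow_succ, mul_assoc]
    _ = sP * sP := by rw [hcP]

lemma hx3P : (tP * sP⁻¹) ^ (3 : ℕ) = 1 := by
  rw [show tP * sP⁻¹ = (sP * sP) * (tP * sP) from hx'P, hcommP.mul_pow, hts3P]
  calc (sP * sP) ^ (3 : ℕ) * (sP * sP) =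
      ((sP * sP) * (sP * sP)) * ((sP * sP) * (sP * sP)) := by simp [pow_succ, mul_assoc]
    _ = 1 * 1 := by rw [hs4P]
    _ = 1 := by simp [pow_succ, mul_assoc]

lemma hconjP : sP * (tP * sP⁻¹) * sP⁻¹ = (tP * sP⁻¹)⁻¹ := by
  calc sP * (tP * sP⁻¹) * sP⁻¹ = sP * (tP * (sP⁻¹ * sP⁻¹)) := by simp [pow_succ, mul_assoc]
    _ = sP * (tP * (tP * tP)) := by rw [← h2P]
    _ = sP * tP⁻¹ := by rw [← htinvP]
    _ = (tP * sP⁻¹)⁻¹ := by simp [pow_succ, mul_assoc]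


open SemidirectProduct in
lemma main_iso (φ : Multiplicative (ZMod 4) →* MulAut (Multiplicative (ZMod 3))) (hφ : φ ≠ 1) :
    Nonempty (PB ≃* SemidirectProduct (Multiplicative (ZMod 3)) (Multiplicative (ZMod 4)) φ) := by
  have hα := phi_eq_inv φ hφ
  have gr1 :
      (inr (Multiplicative.ofAdd 1) : Multiplicative (ZMod 3) ⋊[φ] Multiplicative (ZMod 4)) *
        (inl (Multiplicative.ofAdd 1) * inr (Multiplicative.ofAdd 1)) *
        inr (Multiplicative.ofAdd 1) =
      (inl (Multiplicative.ofAdd 1) * inr (Multiplicative.ofAdd 1)) *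
        inr (Multiplicative.ofAdd 1) *
        (inl (Multiplicative.ofAdd 1) * inr (Multiplicative.ofAdd 1)) := by
    ext
    · simp [_root_.map_mul, MulAut.mul_apply, hα]
      decide
    · simp
  have gr2 :
      (inr (Multiplicative.ofAdd 1) : Multiplicative (ZMod 3) ⋊[φ] Multiplicative (ZMod 4)) *
        (inl (Multiplicative.ofAdd 1) * inr (Multiplicative.ofAdd 1)) *
        (inl (Multiplicative.ofAdd 1) * inr (Multiplicative.ofAdd 1)) *
        inr (Multiplicative.ofAdd 1) = 1 := by
    ext
    · simp [_root_.map_mul, MulAut.mul_apply, hα]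
    · simp
      decide
  have hrels : ∀ r ∈ sphereBraid3Rels,
      FreeGroup.lift (fun b => cond b
        (inr (Multiplicative.ofAdd 1) : Multiplicative (ZMod 3) ⋊[φ] Multiplicative (ZMod 4))
        (inl (Multiplicative.ofAdd 1) * inr (Multiplicative.ofAdd 1))) r = 1 := by
    intro r hr
    rcases hr with rfl | hr
    · simp only [_root_.map_mul, _root_.map_inv, FreeGroup.lift_apply_of, cond_true, cond_false]
      rw [gr1, mul_inv_cancel]
    · rw [Set.mem_singleton_iff] at hr
      subst hr
      simp only [_root_.map_mul, FreeGroup.lift_apply_of, cond_true, cond_false]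
      exact gr2
  set F : PB →* Multiplicative (ZMod 3) ⋊[φ] Multiplicative (ZMod 4) :=
    PresentedGroup.toGroup hrels with hF
  set x : PB := tP * sP⁻¹ with hx
  set f₁ : Multiplicative (ZMod 3) →* PB := zmodHom 3 x hx3P with hf₁
  set f₂ : Multiplicative (ZMod 4) →* PB := zmodHom 4 sP hy4P with hf₂
  have hf₁1 : f₁ (Multiplicative.ofAdd 1) = x := zmodHom_apply_one 3 x hx3P
  have hf₂1 : f₂ (Multiplicative.ofAdd 1) = sP := zmodHom_apply_one 4 sP hy4P
  have key3 : ∀ w : Multiplicative (ZMod 3),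
      w = 1 ∨ w = Multiplicative.ofAdd 1 ∨
        w = Multiplicative.ofAdd 1 * Multiplicative.ofAdd 1 := by decide
  have hconjn : ∀ n, sP * f₁ n * sP⁻¹ = f₁ n⁻¹ := by
    intro n
    rw [_root_.map_inv]
    rcases key3 n with rfl | rfl | rfl
    · simp
    · rw [hf₁1, hx]; exact hconjP
    · rw [_root_.map_mul, hf₁1]
      calc sP * (x * x) * sP⁻¹ = (sP * x * sP⁻¹) * (sP * x * sP⁻¹) := by simp [mul_assoc]
        _ = x⁻¹ * x⁻¹ := by rw [hx, hconjP]
        _ = (x * x)⁻¹ := by simp [mul_assoc]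
  have hconj2 : ∀ n, (sP * sP) * f₁ n * (sP * sP)⁻¹ = f₁ n := by
    intro n
    calc (sP * sP) * f₁ n * (sP * sP)⁻¹ = sP * (sP * f₁ n * sP⁻¹) * sP⁻¹ := by simp [mul_assoc]
      _ = sP * f₁ n⁻¹ * sP⁻¹ := by rw [hconjn]
      _ = f₁ n⁻¹⁻¹ := hconjn _
      _ = f₁ n := by rw [inv_inv]
  have key4 : ∀ w : Multiplicative (ZMod 4),
      w = 1 ∨ w = Multiplicative.ofAdd 1 ∨
        w = Multiplicative.ofAdd 1 * Multiplicative.ofAdd 1 ∨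
        w = Multiplicative.ofAdd 1 * (Multiplicative.ofAdd 1 * Multiplicative.ofAdd 1) := by
    decide
  have hcompat : ∀ g, f₁.comp (φ g).toMonoidHom =
      (MulAut.conj (f₂ g)).toMonoidHom.comp f₁ := by
    intro g
    apply homExt3
    simp only [MonoidHom.comp_apply, MulEquiv.coe_toMonoidHom, MulAut.conj_apply]
    show f₁ (φ g (Multiplicative.ofAdd 1)) =
      f₂ g * f₁ (Multiplicative.ofAdd 1) * (f₂ g)⁻¹
    rcases key4 g with rfl | rfl | rfl | rfl
    · simp
    · rw [hα, hf₂1]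
      exact (hconjn _).symm
    · simp only [_root_.map_mul, MulAut.mul_apply, hα, inv_inv, hf₂1]
      exact (hconj2 _).symm
    · simp only [_root_.map_mul, MulAut.mul_apply, hα, inv_inv, hf₂1]
      calc f₁ (Multiplicative.ofAdd 1)⁻¹ =
          sP * ((sP * sP) * f₁ (Multiplicative.ofAdd 1) * (sP * sP)⁻¹) * sP⁻¹ := by
            rw [hconj2, hconjn]
        _ = sP * (sP * sP) * f₁ (Multiplicative.ofAdd 1) * (sP * (sP * sP))⁻¹ := by
            simp [mul_assoc]
  set L : (Multiplicative (ZMod 3) ⋊[φ] Multiplicative (ZMod 4)) →* PB :=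
    SemidirectProduct.lift f₁ f₂ hcompat with hL
  have hLF : L.comp F = MonoidHom.id PB := by
    apply PresentedGroup.ext
    intro b
    cases b
    · show L (F (PresentedGroup.of false)) = PresentedGroup.of false
      rw [hF, PresentedGroup.toGroup.of hrels]
      show L (inl (Multiplicative.ofAdd 1) * inr (Multiplicative.ofAdd 1)) = tP
      rw [_root_.map_mul, hL, SemidirectProduct.lift_inl, SemidirectProduct.lift_inr,
        hf₁1, hf₂1, hx]
      simp [mul_assoc]
    · show L (F (PresentedGroup.of true)) = PresentedGroup.of true
      rw [hF, PresentedGroup.toGroup.of hrels]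
      show L (inr (Multiplicative.ofAdd 1)) = sP
      rw [hL, SemidirectProduct.lift_inr, hf₂1]
  have hFL : F.comp L = MonoidHom.id (Multiplicative (ZMod 3) ⋊[φ] Multiplicative (ZMod 4)) := by
    apply SemidirectProduct.hom_ext
    · apply homExt3
      show F (L (inl (Multiplicative.ofAdd 1))) =
        (MonoidHom.id _) (inl (Multiplicative.ofAdd 1))
      rw [hL, SemidirectProduct.lift_inl, hf₁1, hx, _root_.map_mul, _root_.map_inv]
      show F (PresentedGroup.of false) * (F (PresentedGroup.of true))⁻¹ = _
      rw [hF, PresentedGroup.toGroup.of hrels, PresentedGroup.toGroup.of hrels]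
      show (inl (Multiplicative.ofAdd 1) * inr (Multiplicative.ofAdd 1)) *
        (inr (Multiplicative.ofAdd 1))⁻¹ = inl (Multiplicative.ofAdd 1)
      simp [mul_assoc]
    · apply homExt4
      show F (L (inr (Multiplicative.ofAdd 1))) =
        (MonoidHom.id _) (inr (Multiplicative.ofAdd 1))
      rw [hL, SemidirectProduct.lift_inr, hf₂1]
      exact PresentedGroup.toGroup.of hrels
  exact ⟨MonoidHom.toMulEquiv F L hLF hFL⟩

end Main

/-- `B₃(S²)` is a finite group of order 12, isomorphic to the semidirect product
`ℤ/3 ⋊ ℤ/4` with the non-trivial action of `ℤ/4` on `ℤ/3` (there is a unique such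
non-trivial action, namely inversion). -/
theorem sphereBraidGroupThree_card_and_iso :
    Nat.card SphereBraidGroupThree = 12 ∧
      ∀ φ : Multiplicative (ZMod 4) →* MulAut (Multiplicative (ZMod 3)), φ ≠ 1 →
        Nonempty (SphereBraidGroupThree ≃*
          SemidirectProduct (Multiplicative (ZMod 3)) (Multiplicative (ZMod 4)) φ) := by
  have main := main_iso
  constructor
  · -- construct an explicit nontrivial φ₀
    set ι : MulAut (Multiplicative (ZMod 3)) := MulEquiv.inv (Multiplicative (ZMod 3)) with hι
    have hι4 : ι ^ (4 : ℕ) = 1 := by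
      ext n
      show ι (ι (ι (ι n))) = n
      simp [hι]
    set φ₀ := zmodHom 4 ι hι4 with hφ₀def
    have hφ₀1 : φ₀ (Multiplicative.ofAdd 1) = ι := zmodHom_apply_one 4 ι hι4
    have hφ₀ : φ₀ ≠ 1 := by
      intro h
      rw [h] at hφ₀1
      have := DFunLike.congr_fun hφ₀1.symm (Multiplicative.ofAdd (1 : ZMod 3))
      rw [hι] at this
      exact (by decide : ¬ (MulEquiv.inv (Multiplicative (ZMod 3))
        (Multiplicative.ofAdd (1 : ZMod 3)) =
          (1 : MulAut (Multiplicative (ZMod 3))) (Multiplicative.ofAdd (1 : ZMod 3)))) this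
    obtain ⟨e⟩ := main φ₀ hφ₀
    have h1 : Nat.card SphereBraidGroupThree =
        Nat.card (SemidirectProduct (Multiplicative (ZMod 3)) (Multiplicative (ZMod 4)) φ₀) :=
      Nat.card_congr e.toEquiv
    have h2 : Nat.card (SemidirectProduct (Multiplicative (ZMod 3)) (Multiplicative (ZMod 4)) φ₀)
        = Nat.card (Multiplicative (ZMod 3) × Multiplicative (ZMod 4)) :=
      Nat.card_congr ⟨fun g => (g.left, g.right), fun p => ⟨p.1, p.2⟩,
        fun g => rfl, fun p => rfl⟩
    rw [h1, h2, Nat.card_prod]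
    rw [Nat.card_eq_fintype_card, Nat.card_eq_fintype_card]
    simp [ZMod.card]
  · intro φ hφ
    exact main φ hφ
end

section
/- Let G be a group whose centre Z(G) contains an element z of order 2 such that z is the unique torsion element of G other than the identity, and suppose every finite-order element of G is torsion. Then every infinite virtually cyclic subgroup of G is isomorphic to Z or to Z × Z/2. -/
private theorem aux_infinite {K : Type*} [Group K] [Infinite K] (N : Subgroup K)
    [N.FiniteIndex] : Infinite N := by
  by_contra h
  rw [not_infinite_iff_finite] at h
  haveI := h
  haveI : Finite K := Finite.of_equiv ((K ⧸ N) × N) Subgroup.groupEquivQuotientProdSubgroup.symm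
  exact not_finite K

private theorem aux_central_gen (K : Type*) [Group K] [Infinite K]
    (htc : ∀ g : K, IsOfFinOrder g → g ∈ Subgroup.center K)
    (C : Subgroup K) (hC : IsCyclic C) (hCfi : C.FiniteIndex) :
    ∃ x : K, ¬ IsOfFinOrder x ∧ (Subgroup.zpowers x).FiniteIndex ∧ x ∈ Subgroup.center K := by
  haveI := hC
  haveI := hCfi
  set N := C.normalCore with hNdef
  haveI hNn : N.Normal := Subgroup.normalCore_normal C
  haveI hNfi : N.FiniteIndex := Subgroup.finiteIndex_normalCore C
  haveI : Infinite N := aux_infinite N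
  haveI : IsCyclic N :=
    isCyclic_of_surjective (Subgroup.subgroupOfEquivOfLe (Subgroup.normalCore_le C)).toMonoidHom
      (Subgroup.subgroupOfEquivOfLe (Subgroup.normalCore_le C)).surjective
  obtain ⟨g, hg⟩ := IsCyclic.exists_generator (α := N)
  set x : K := (g : K) with hxdef
  have hzp : Subgroup.zpowers x = N := by
    apply le_antisymm (Subgroup.zpowers_le.mpr g.2)
    intro a ha
    obtain ⟨n, hn⟩ := Subgroup.mem_zpowers_iff.mp (hg ⟨a, ha⟩)
    refine Subgroup.mem_zpowers_iff.mpr ⟨n, ?_⟩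
    have := congrArg (Subtype.val) hn
    simpa using this
  have hNinf : (N : Set K).Infinite := (Set.infinite_coe_iff (s := (N : Set K))).mp ‹Infinite ↥N›
  have hx : ¬ IsOfFinOrder x := by
    intro hfin
    have hfz : (Subgroup.zpowers x : Set K).Finite := hfin.finite_zpowers
    rw [show ((Subgroup.zpowers x : Subgroup K) : Set K) = (N : Set K) from congrArg _ hzp] at hfz
    exact hNinf hfz
  have hinj : Function.Injective fun n : ℤ => x ^ n :=
    injective_zpow_iff_not_isOfFinOrder.mpr hx
  refine ⟨x, hx, by rw [hzp]; exact hNfi, Subgroup.mem_center_iff.mpr ?_⟩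
  intro h
  have hmem : (MulAut.conj h) x ∈ N := by
    simpa using hNn.conj_mem x g.2 h
  obtain ⟨n, hn⟩ := Subgroup.mem_zpowers_iff.mp (hzp ▸ hmem)
  have hmem2 : (MulAut.conj h).symm x ∈ N := by
    simpa [MulAut.conj_symm_apply] using hNn.conj_mem x g.2 h⁻¹
  obtain ⟨p, hp⟩ := Subgroup.mem_zpowers_iff.mp (hzp ▸ hmem2)
  have hxnp : x ^ (n * p) = x ^ (1 : ℤ) := by
    rw [zpow_one]
    calc x ^ (n * p) = (x ^ n) ^ p := by rw [zpow_mul]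
      _ = ((MulAut.conj h) x) ^ p := by rw [hn]
      _ = (MulAut.conj h) (x ^ p) := (map_zpow _ _ _).symm
      _ = (MulAut.conj h) ((MulAut.conj h).symm x) := by rw [hp]
      _ = x := (MulAut.conj h).apply_symm_apply x
  rcases Int.eq_one_or_neg_one_of_mul_eq_one (hinj hxnp) with h1 | h1
  · have hcx : h * x * h⁻¹ = x := by
      rw [← MulAut.conj_apply, ← hn, h1, zpow_one]
    exact mul_inv_eq_iff_eq_mul.mp hcx
  · have hk : h ^ N.index ∈ N := Subgroup.pow_index_mem N h
    obtain ⟨e, he⟩ := Subgroup.mem_zpowers_iff.mp (hzp ▸ hk)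
    have h2 : (MulAut.conj h) (x ^ e) = x ^ e := by
      rw [he, MulAut.conj_apply]
      group
    have h3 : (MulAut.conj h) (x ^ e) = x ^ (-e) := by
      rw [map_zpow, ← hn, h1, ← zpow_mul]
      norm_num
    have he0 : e = 0 := by
      have := hinj (h2.symm.trans h3)
      omega
    have hfo : IsOfFinOrder h := by
      refine isOfFinOrder_iff_pow_eq_one.mpr ⟨N.index, Nat.pos_of_ne_zero hNfi.index_ne_zero, ?_⟩
      rw [← hzp, ← he, he0, zpow_zero]
    exact (Subgroup.mem_center_iff.mp (htc h hfo) x).symm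

open scoped commutatorElement in
private theorem aux_tf (K : Type*) [Group K] [Infinite K]
    (htf : ∀ g : K, IsOfFinOrder g → g = 1)
    (C : Subgroup K) (hC : IsCyclic C) (hCfi : C.FiniteIndex) :
    ∃ v : K, Function.Bijective fun n : ℤ => v ^ n := by
  obtain ⟨x, hx, hNfi, hxc⟩ := aux_central_gen K
    (fun g hg => by rw [htf g hg]; exact (Subgroup.center K).one_mem) C hC hCfi
  haveI := hNfi
  have hle : Subgroup.zpowers x ≤ Subgroup.center K := Subgroup.zpowers_le.mpr hxc
  haveI : (Subgroup.center K).FiniteIndex := Subgroup.finiteIndex_of_le hle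
  have hinj : Function.Injective fun n : ℤ => x ^ n :=
    injective_zpow_iff_not_isOfFinOrder.mpr hx
  -- commutativity via the transfer homomorphism
  have hcomm : ∀ a b : K, a * b = b * a := by
    intro a b
    set φ := MonoidHom.transferCenterPow K with hφ
    have h1 : φ ⁅a, b⁆ = 1 := by
      rw [commutatorElement_def, map_mul, map_mul, map_mul, map_inv, map_inv,
        show φ a * φ b = φ b * φ a from Subtype.ext (Subgroup.mem_center_iff.mp (φ b).2 _)]
      group
    have h2 : ⁅a, b⁆ ^ (Subgroup.center K).index = 1 := by
      have := MonoidHom.transferCenterPow_apply (G := K) ⁅a, b⁆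
      rw [h1] at this
      simpa using this.symm
    have h3 : IsOfFinOrder ⁅a, b⁆ := isOfFinOrder_iff_pow_eq_one.mpr
      ⟨(Subgroup.center K).index,
        Nat.pos_of_ne_zero Subgroup.FiniteIndex.index_ne_zero, h2⟩
    exact commutatorElement_eq_one_iff_mul_comm.mp (htf _ h3)
  letI : CommGroup K := { ‹Group K› with mul_comm := hcomm }
  haveI hNnormal : (Subgroup.zpowers x).Normal := ⟨fun a ha g => by
    rw [hcomm g a, mul_inv_cancel_right]; exact ha⟩
  set m := (Subgroup.zpowers x).index with hm
  have hm0 : m ≠ 0 := Subgroup.FiniteIndex.index_ne_zero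
  have hpow : ∀ h : K, ∃ n : ℤ, x ^ n = h ^ m :=
    fun h => Subgroup.mem_zpowers_iff.mp ((Subgroup.zpowers x).pow_index_mem h)
  set S : AddSubgroup ℤ :=
    { carrier := {n : ℤ | ∃ h : K, x ^ n = h ^ m}
      zero_mem' := ⟨1, by simp⟩
      add_mem' := by
        rintro a b ⟨h, hh⟩ ⟨h', hh'⟩
        exact ⟨h * h', by rw [zpow_add, hh, hh', mul_pow]⟩
      neg_mem' := by
        rintro a ⟨h, hh⟩
        exact ⟨h⁻¹, by rw [zpow_neg, hh, inv_pow]⟩ } with hS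
  obtain ⟨d, hd⟩ := Int.subgroup_cyclic S
  have hdS : d ∈ S := by rw [hd]; exact AddSubgroup.subset_closure rfl
  obtain ⟨v, hv⟩ : ∃ h : K, x ^ d = h ^ m := hdS
  have hd0 : d ≠ 0 := by
    intro h0
    have hmS : (m : ℤ) ∈ S := ⟨x, by rw [zpow_natCast]⟩
    rw [hd, h0] at hmS
    obtain ⟨c, hc⟩ := AddSubgroup.mem_closure_singleton.mp hmS
    simp only [smul_zero] at hc
    exact hm0 (by exact_mod_cast hc.symm)
  have hv0 : ¬ IsOfFinOrder v := by
    intro hf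
    rw [htf v hf, one_pow] at hv
    exact hd0 (hinj (hv.trans (zpow_zero x).symm))
  refine ⟨v, injective_zpow_iff_not_isOfFinOrder.mpr hv0, ?_⟩
  intro h
  obtain ⟨n, hn⟩ := hpow h
  have hnS : n ∈ S := ⟨h, hn⟩
  rw [hd] at hnS
  obtain ⟨c, hc⟩ := AddSubgroup.mem_closure_singleton.mp hnS
  rw [smul_eq_mul] at hc
  have key : (v ^ c) ^ (m : ℤ) = h ^ (m : ℤ) := by
    rw [← zpow_mul, mul_comm c (m : ℤ), zpow_mul, zpow_natCast, zpow_natCast, ← hv,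
      ← zpow_mul, mul_comm d c, hc, hn]
  have hw : (h * (v ^ c)⁻¹) ^ m = 1 := by
    rw [mul_pow, inv_pow, ← zpow_natCast h, ← zpow_natCast (v ^ c), key]
    group
  have hfo : IsOfFinOrder (h * (v ^ c)⁻¹) :=
    isOfFinOrder_iff_pow_eq_one.mpr ⟨m, Nat.pos_of_ne_zero hm0, hw⟩
  have := htf _ hfo
  exact ⟨c, (mul_inv_eq_one.mp this).symm⟩

private theorem aux_invol (K : Type*) [Group K] [Infinite K]
    (ζ : K) (hζc : ζ ∈ Subgroup.center K) (hζ2 : orderOf ζ = 2)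
    (hu : ∀ g : K, g ≠ 1 → IsOfFinOrder g → g = ζ)
    (C : Subgroup K) (hC : IsCyclic C) (hCfi : C.FiniteIndex) :
    Nonempty (K ≃* Multiplicative ℤ × Multiplicative (ZMod 2)) := by
  have hζ1 : ζ ≠ 1 := by
    intro h; rw [h, orderOf_one] at hζ2; omega
  have hζsq : ζ ^ 2 = 1 := by rw [← hζ2]; exact pow_orderOf_eq_one ζ
  have htor : ∀ g : K, IsOfFinOrder g → g = 1 ∨ g = ζ := by
    intro g hg
    by_cases h1 : g = 1
    · exact Or.inl h1
    · exact Or.inr (hu g h1 hg)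
  have htc : ∀ g : K, IsOfFinOrder g → g ∈ Subgroup.center K := by
    intro g hg
    rcases htor g hg with rfl | rfl
    · exact (Subgroup.center K).one_mem
    · exact hζc
  obtain ⟨x, hx, hNfi, hxc⟩ := aux_central_gen K htc C hC hCfi
  haveI := hNfi
  have hinj : Function.Injective fun n : ℤ => x ^ n :=
    injective_zpow_iff_not_isOfFinOrder.mpr hx
  set Z := Subgroup.zpowers ζ with hZdef
  have hζmemZ : ζ ∈ Z := Subgroup.mem_zpowers ζ
  have hz2 : ζ ^ (2 : ℤ) = 1 := by
    rw [show (2:ℤ) = ((2:ℕ):ℤ) from rfl, zpow_natCast, hζsq]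
  have h2k : ∀ k : ℤ, ζ ^ (2 * k) = 1 := fun k => by rw [zpow_mul, hz2, one_zpow]
  have hzpow : ∀ n : ℤ, ζ ^ n = 1 ∨ ζ ^ n = ζ := by
    intro n
    rcases Int.even_or_odd n with ⟨k, hk⟩ | ⟨k, hk⟩
    · left; rw [hk, ← two_mul, h2k]
    · right; rw [hk, zpow_add, h2k, zpow_one, one_mul]
  have hZiff : ∀ a : K, a ∈ Z ↔ (a = 1 ∨ a = ζ) := by
    intro a
    constructor
    · intro ha
      obtain ⟨n, hn⟩ := Subgroup.mem_zpowers_iff.mp ha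
      rw [← hn]; exact hzpow n
    · rintro (rfl | rfl)
      · exact Z.one_mem
      · exact hζmemZ
  haveI hZn : Z.Normal := by
    constructor
    intro a ha g
    have hac : a ∈ Subgroup.center K := by
      rcases (hZiff a).mp ha with rfl | rfl
      · exact (Subgroup.center K).one_mem
      · exact hζc
    rw [Subgroup.mem_center_iff.mp hac g, mul_inv_cancel_right]
    exact ha
  -- the quotient K ⧸ Z is infinite
  have hZcard : Nat.card Z = 2 := by rw [hZdef, Nat.card_zpowers, hζ2]
  have hcard : Nat.card K = Nat.card (K ⧸ Z) * Nat.card Z :=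
    Subgroup.card_eq_card_quotient_mul_card_subgroup Z
  have hK0 : Nat.card K = 0 := Nat.card_eq_zero_of_infinite
  have hQ0 : Nat.card (K ⧸ Z) = 0 := by
    rw [hK0, hZcard] at hcard; omega
  haveI hQinf : Infinite (K ⧸ Z) := by
    rcases Nat.card_eq_zero.mp hQ0 with h | h
    · exact (h.false (1 : K ⧸ Z)).elim
    · exact h
  set π := QuotientGroup.mk' Z with hπ
  -- the quotient is torsion-free
  have htfQ : ∀ q : K ⧸ Z, IsOfFinOrder q → q = 1 := by
    intro q hq
    obtain ⟨h, rfl⟩ := QuotientGroup.mk'_surjective Z q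
    obtain ⟨k, hk0, hk⟩ := isOfFinOrder_iff_pow_eq_one.mp hq
    have hkZ : h ^ k ∈ Z := by
      refine (QuotientGroup.eq_one_iff _).mp ?_
      rw [← map_pow] at hk
      exact hk
    have h2k' : h ^ (k * 2) = 1 := by
      rw [pow_mul]
      rcases (hZiff _).mp hkZ with h1 | h1 <;> rw [h1]
      · exact one_pow 2
      · exact hζsq
    have hfo : IsOfFinOrder h := isOfFinOrder_iff_pow_eq_one.mpr
      ⟨k * 2, by positivity, h2k'⟩
    rcases htor h hfo with rfl | he
    · exact map_one π
    · rw [he]; exact (QuotientGroup.eq_one_iff ζ).mpr hζmemZ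
  -- a cyclic finite-index subgroup of the quotient
  have hmapzp : Subgroup.zpowers (π x) = (Subgroup.zpowers x).map π :=
    (MonoidHom.map_zpowers π x).symm
  have hCQfi : (Subgroup.zpowers (π x)).FiniteIndex := by
    constructor
    have hdvd := Subgroup.index_map_dvd (Subgroup.zpowers x)
      (QuotientGroup.mk'_surjective Z)
    rw [← hmapzp] at hdvd
    intro h0; rw [h0] at hdvd
    exact hNfi.index_ne_zero (Nat.eq_zero_of_zero_dvd hdvd)
  have hCQcyc : IsCyclic (Subgroup.zpowers (π x)) := by
    constructor
    refine ⟨⟨π x, Subgroup.mem_zpowers _⟩, ?_⟩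
    rintro ⟨a, ha⟩
    obtain ⟨n, hn⟩ := Subgroup.mem_zpowers_iff.mp ha
    refine Subgroup.mem_zpowers_iff.mpr ⟨n, ?_⟩
    ext
    simpa using hn
  obtain ⟨v', hv'bij⟩ := aux_tf (K ⧸ Z) htfQ _ hCQcyc hCQfi
  haveI : IsCyclic (K ⧸ Z) :=
    ⟨⟨v', fun q => Subgroup.mem_zpowers_iff.mpr (hv'bij.2 q)⟩⟩
  have hcomm : ∀ a b : K, a * b = b * a :=
    commutative_of_cyclic_center_quotient π
      (by rw [QuotientGroup.ker_mk']; exact Subgroup.zpowers_le.mpr hζc)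
  letI : CommGroup K := { ‹Group K› with mul_comm := hcomm }
  haveI hNnormal : (Subgroup.zpowers x).Normal := ⟨fun a ha g => by
    rw [hcomm g a, mul_inv_cancel_right]; exact ha⟩
  set m := (Subgroup.zpowers x).index with hm
  have hm0 : m ≠ 0 := Subgroup.FiniteIndex.index_ne_zero
  have hpow : ∀ h : K, ∃ n : ℤ, x ^ n = h ^ m :=
    fun h => Subgroup.mem_zpowers_iff.mp ((Subgroup.zpowers x).pow_index_mem h)
  set S : AddSubgroup ℤ :=
    { carrier := {n : ℤ | ∃ h : K, x ^ n = h ^ m}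
      zero_mem' := ⟨1, by simp⟩
      add_mem' := by
        rintro a b ⟨h, hh⟩ ⟨h', hh'⟩
        exact ⟨h * h', by rw [zpow_add, hh, hh', mul_pow]⟩
      neg_mem' := by
        rintro a ⟨h, hh⟩
        exact ⟨h⁻¹, by rw [zpow_neg, hh, inv_pow]⟩ } with hS
  obtain ⟨d, hd⟩ := Int.subgroup_cyclic S
  have hdS : d ∈ S := by rw [hd]; exact AddSubgroup.subset_closure rfl
  obtain ⟨v, hv⟩ : ∃ h : K, x ^ d = h ^ m := hdS
  have hd0 : d ≠ 0 := by
    intro h0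
    have hmS : (m : ℤ) ∈ S := ⟨x, by rw [zpow_natCast]⟩
    rw [hd, h0] at hmS
    obtain ⟨c, hc⟩ := AddSubgroup.mem_closure_singleton.mp hmS
    simp only [smul_zero] at hc
    exact hm0 (by exact_mod_cast hc.symm)
  -- ζ ^ m = 1
  have hζm : ζ ^ m = 1 := by
    obtain ⟨n, hn⟩ := hpow ζ
    have hsq : (ζ ^ m) ^ 2 = 1 := by
      rw [← pow_mul, mul_comm m 2, pow_mul, hζsq, one_pow]
    have hxn2 : x ^ (n * 2) = x ^ (0 : ℤ) := by
      rw [zpow_zero, zpow_mul, hn]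
      exact_mod_cast hsq
    have hn0 : n = 0 := by have := hinj hxn2; omega
    rw [← hn, hn0, zpow_zero]
  have hv0 : ¬ IsOfFinOrder v := by
    intro hf
    rcases htor v hf with rfl | rfl
    · rw [one_pow] at hv; exact hd0 (hinj (hv.trans (zpow_zero x).symm))
    · rw [hζm] at hv; exact hd0 (hinj (hv.trans (zpow_zero x).symm))
  -- ZMod 2 facts
  have hval0 : ((0 : ZMod 2)).val = 0 := rfl
  have hval1 : ((1 : ZMod 2)).val = 1 := rfl
  have hcases : ∀ e : ZMod 2, e = 0 ∨ e = 1 := by decide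
  have hζval : ∀ e e' : ZMod 2, ζ ^ (e + e').val = ζ ^ e.val * ζ ^ e'.val := by
    intro e e'
    rcases hcases e with rfl | rfl <;> rcases hcases e' with rfl | rfl
    · simp
    · simp
    · simp
    · rw [show ((1:ZMod 2)+1).val = 0 from rfl, hval1, pow_zero, pow_one, ← hζsq, pow_two]
  have hζvalinj : ∀ e e' : ZMod 2, ζ ^ e.val = ζ ^ e'.val → e = e' := by
    intro e e' h
    rcases hcases e with rfl | rfl <;> rcases hcases e' with rfl | rfl
    · rfl
    · rw [hval0, hval1, pow_zero, pow_one] at h; exact absurd h.symm hζ1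
    · rw [hval0, hval1, pow_zero, pow_one] at h; exact absurd h hζ1
    · rfl
  -- the bijection
  set f : Multiplicative ℤ × Multiplicative (ZMod 2) → K :=
    fun p => v ^ (Multiplicative.toAdd p.1) * ζ ^ (Multiplicative.toAdd p.2).val with hf
  have hpowv : ∀ a : ℤ, (v ^ a) ^ (m : ℤ) = x ^ (d * a) := by
    intro a
    calc (v ^ a) ^ (m : ℤ) = (v ^ (m : ℤ)) ^ a := by
          rw [← zpow_mul, mul_comm, zpow_mul]
      _ = (x ^ d) ^ a := by rw [zpow_natCast, ← hv]
      _ = x ^ (d * a) := by rw [← zpow_mul]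
  have hfpowm : ∀ (a : ℤ) (s : ℕ), ((v ^ a * ζ ^ s) ^ (m : ℤ)) = x ^ (d * a) := by
    intro a s
    have h2 : (ζ ^ s) ^ (m : ℤ) = 1 := by
      rw [zpow_natCast, ← pow_mul, mul_comm s m, pow_mul, hζm, one_pow]
    rw [mul_zpow, hpowv, h2, mul_one]
  have hfinj : Function.Injective f := by
    intro p q hpq
    simp only [hf] at hpq
    have h1 := congrArg (fun y : K => y ^ (m : ℤ)) hpq
    simp only [hf, hfpowm] at h1
    have ha : Multiplicative.toAdd p.1 = Multiplicative.toAdd q.1 :=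
      mul_left_cancel₀ hd0 (hinj h1)
    have hpq' : v ^ (Multiplicative.toAdd q.1) * ζ ^ (Multiplicative.toAdd p.2).val
        = v ^ (Multiplicative.toAdd q.1) * ζ ^ (Multiplicative.toAdd q.2).val := by
      rw [ha] at hpq; exact hpq
    have hz := hζvalinj _ _ (mul_left_cancel hpq')
    exact Prod.ext (Multiplicative.toAdd.injective ha) (Multiplicative.toAdd.injective hz)
  have hfsurj : Function.Surjective f := by
    intro h
    obtain ⟨n, hn⟩ := hpow h
    have hnS : n ∈ S := ⟨h, hn⟩
    rw [hd] at hnS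
    obtain ⟨c, hc⟩ := AddSubgroup.mem_closure_singleton.mp hnS
    rw [smul_eq_mul] at hc
    have key : (v ^ c) ^ (m : ℤ) = h ^ (m : ℤ) := by
      rw [hpowv, mul_comm d c, hc, hn, zpow_natCast]
    have hw : (h * (v ^ c)⁻¹) ^ m = 1 := by
      rw [mul_pow, inv_pow, ← zpow_natCast h, ← zpow_natCast (v ^ c), key]
      group
    have hfo : IsOfFinOrder (h * (v ^ c)⁻¹) :=
      isOfFinOrder_iff_pow_eq_one.mpr ⟨m, Nat.pos_of_ne_zero hm0, hw⟩
    rcases htor _ hfo with h1 | h1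
    · refine ⟨(Multiplicative.ofAdd c, Multiplicative.ofAdd 0), ?_⟩
      show v ^ c * ζ ^ (0 : ZMod 2).val = h
      rw [hval0, pow_zero, mul_one]
      exact (mul_inv_eq_one.mp h1).symm
    · refine ⟨(Multiplicative.ofAdd c, Multiplicative.ofAdd 1), ?_⟩
      show v ^ c * ζ ^ (1 : ZMod 2).val = h
      rw [hval1, pow_one]
      exact ((mul_inv_eq_iff_eq_mul.mp h1).trans (hcomm ζ (v ^ c))).symm
  have hfmul : ∀ p q, f (p * q) = f p * f q := by
    intro p q
    show v ^ (Multiplicative.toAdd (p.1 * q.1)) * ζ ^ (Multiplicative.toAdd (p.2 * q.2)).val = _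
    rw [toAdd_mul, toAdd_mul, zpow_add, hζval, mul_mul_mul_comm]
  exact ⟨(MulEquiv.mk (Equiv.ofBijective f ⟨hfinj, hfsurj⟩) hfmul).symm⟩

/-- Let `G` be a group whose centre contains an element `z` of order 2 that is the unique
non-identity torsion (= finite-order) element of `G`. Then every infinite virtually
cyclic subgroup of `G` is isomorphic to `ℤ` or to `ℤ × ℤ/2`. -/
theorem infinite_virtuallyCyclic_subgroup_of_unique_central_involution
    (G : Type*) [Group G] (z : G)
    (hz : z ∈ Subgroup.center G) (hz2 : orderOf z = 2)
    (huniq : ∀ g : G, g ≠ 1 → IsOfFinOrder g → g = z)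
    (H : Subgroup G) (hHinf : Infinite H)
    (hHvc : ∃ C : Subgroup H, IsCyclic C ∧ C.FiniteIndex) :
    Nonempty (H ≃* Multiplicative ℤ) ∨
      Nonempty (H ≃* Multiplicative ℤ × Multiplicative (ZMod 2)) := by
  haveI := hHinf
  obtain ⟨C, hC, hCfi⟩ := hHvc
  have horder : ∀ g : ↥H, IsOfFinOrder g → IsOfFinOrder (g : G) := by
    intro g hg
    obtain ⟨k, hk0, hk⟩ := isOfFinOrder_iff_pow_eq_one.mp hg
    refine isOfFinOrder_iff_pow_eq_one.mpr ⟨k, hk0, ?_⟩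
    exact_mod_cast congrArg (Subtype.val) hk
  by_cases hzH : z ∈ H
  · right
    refine aux_invol ↥H ⟨z, hzH⟩ ?_ ?_ ?_ C hC hCfi
    · refine Subgroup.mem_center_iff.mpr fun k => ?_
      exact Subtype.ext (Subgroup.mem_center_iff.mp hz (k : G))
    · rw [Subgroup.orderOf_mk]; exact hz2
    · intro g hg1 hgf
      refine Subtype.ext (huniq g ?_ (horder g hgf))
      intro h1
      exact hg1 (Subtype.ext h1)
  · left
    have htf : ∀ g : ↥H, IsOfFinOrder g → g = 1 := by
      intro g hg
      by_contra hg1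
      have hgz : (g : G) = z := huniq g (fun h1 => hg1 (Subtype.ext h1)) (horder g hg)
      exact hzH (hgz ▸ g.2)
    obtain ⟨v, hvbij⟩ := aux_tf ↥H htf C hC hCfi
    set f : Multiplicative ℤ → ↥H := fun n => v ^ (Multiplicative.toAdd n) with hf
    have hfbij : Function.Bijective f :=
      hvbij.comp (Multiplicative.toAdd (α := ℤ)).bijective
    have hfmul : ∀ a b, f (a * b) = f a * f b := by
      intro a b
      show v ^ (Multiplicative.toAdd (a * b)) = v ^ (Multiplicative.toAdd a) * v ^ (Multiplicative.toAdd b)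
      rw [toAdd_mul, zpow_add]
    exact ⟨(MulEquiv.mk (Equiv.ofBijective f hfbij) hfmul).symm⟩
end
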